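/- Let A_V be the automaton over Σ_k^2 with states {q₀, q₁, s}, initial state q₀, and transitions: (q₀, (0, 0), q₀); (q₀, (a, 1), q₁) for every a ∈ {1,…,k−1}; (q₁, (a, 0), q₁) for every a ∈ {0,…,k−1}; and all remaining letter–state pairs lead to the sink s (including (s, ·, s)). Then for all x, y, n ∈ ℕ: (x mod k^n = 0 and y mod k^n = 0) if and only if W_{A_V,q₀}(x, y, n); and V_k(x mod k^n) = y mod k^n if and only if (W_{A_V,q₀}(x, y, n) or W_{A_V,q₁}(x, y, n)). -/

import Mathlib

/-- The `i`-th base-`k` digit of `x`. -/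
def digit (k x i : ℕ) : ℕ := x / k ^ i % k

/-- A finite automaton over the alphabet `Σ_k^m = (Fin k)^m`. -/
structure FA (k m : ℕ) where
  Q : Type
  fin : Finite Q
  q0 : Q
  acc : Set Q
  δ : Set (Q × (Fin m → Fin k) × Q)

/-- The run predicate `W_{A,q₁}(x⃗, n)`: the automaton `A` can reach state `q₁`
after reading the first `n` base-`k` digits of `x⃗`, the run being encoded by a
family `(w_q)` of natural numbers. -/
def FA.W {k m : ℕ} (A : FA k m) (q1 : A.Q) (x : Fin m → ℕ) (n : ℕ) : Prop :=
  ∃ w : A.Q → ℕ,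
    (∀ q, w q < k ^ (n + 1)) ∧
    (∀ i ≤ n, ∃ q, digit k (w q) i = 1 ∧ ∀ q' ≠ q, digit k (w q') i = 0) ∧
    digit k (w A.q0) 0 = 1 ∧ digit k (w q1) n = 1 ∧
    ∀ i < n, ∀ q, digit k (w q) i = 1 →
      ∃ a : Fin m → Fin k, ∃ q', (q, a, q') ∈ A.δ ∧ digit k (w q') (i + 1) = 1 ∧
        ∀ j, digit k (x j) i = (a j : ℕ)

/-- `V_k(x)`: the largest power of `k` dividing `x` (with `V_k(0) = 0`). -/
def Vk (k x : ℕ) : ℕ :=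
  if x = 0 then 0 else k ^ Nat.findGreatest (fun n => k ^ n ∣ x) x

/-- The automaton `A_V` recognizing `V_k(x) = y`: states `q₀ = 0`, `q₁ = 1` and a
sink `s = 2`; transitions `(q₀,(0,0),q₀)`, `(q₀,(a,1),q₁)` for `a ≥ 1`,
`(q₁,(a,0),q₁)`, and all remaining letter–state pairs go to the sink. -/
def AV (k : ℕ) : FA k 2 where
  Q := Fin 3
  fin := inferInstance
  q0 := 0
  acc := {0, 1}
  δ := {t | (t.1 = 0 ∧ ((t.2.1 0 : ℕ) = 0 ∧ (t.2.1 1 : ℕ) = 0) ∧ t.2.2 = 0) ∨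
            (t.1 = 0 ∧ (1 ≤ (t.2.1 0 : ℕ) ∧ (t.2.1 1 : ℕ) = 1) ∧ t.2.2 = 1) ∨
            (t.1 = 1 ∧ (t.2.1 1 : ℕ) = 0 ∧ t.2.2 = 1) ∨
            (t.1 = 0 ∧ ¬((t.2.1 0 : ℕ) = 0 ∧ (t.2.1 1 : ℕ) = 0) ∧
              ¬(1 ≤ (t.2.1 0 : ℕ) ∧ (t.2.1 1 : ℕ) = 1) ∧ t.2.2 = 2) ∨
            (t.1 = 1 ∧ (t.2.1 1 : ℕ) ≠ 0 ∧ t.2.2 = 2) ∨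
            (t.1 = 2 ∧ t.2.2 = 2)}

section Helpers
variable {k : ℕ}
variable {k : ℕ}

lemma digit_lt (hk : 2 ≤ k) (x i : ℕ) : digit k x i < k := Nat.mod_lt _ (by omega)

lemma digit_eq_mod_div (x i : ℕ) : digit k x i = x % (k ^ i * k) / k ^ i := by
  rw [Nat.mod_mul_right_div_self]; rfl

lemma digit_mod_pow {i n : ℕ} (hin : i < n) (x : ℕ) :
    digit k (x % k ^ n) i = digit k x i := by
  rw [digit_eq_mod_div, digit_eq_mod_div, Nat.mod_mod_of_dvd]
  rw [← pow_succ]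
  exact pow_dvd_pow k hin

lemma mod_pow_succ (x n : ℕ) :
    x % k ^ (n + 1) = x % k ^ n + k ^ n * digit k x n := by
  have h1 : x % k ^ (n+1) % k ^ n = x % k ^ n :=
    Nat.mod_mod_of_dvd _ (pow_dvd_pow k (by omega))
  have h2 : digit k x n = x % k ^ (n+1) / k ^ n := by
    rw [digit_eq_mod_div, pow_succ]
  rw [h2, ← h1]
  exact (Nat.mod_add_div _ _).symm

lemma mod_pow_eq_zero_iff (hk : 2 ≤ k) (x n : ℕ) :
    x % k ^ n = 0 ↔ ∀ i < n, digit k x i = 0 := by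
  induction n with
  | zero => simp [Nat.mod_one]
  | succ n ih =>
    rw [mod_pow_succ]
    have hkn : 0 < k ^ n := Nat.pow_pos (by omega)
    rw [Nat.add_eq_zero, Nat.mul_eq_zero]
    constructor
    · rintro ⟨h1, h2⟩ i hi
      rcases Nat.lt_succ_iff_lt_or_eq.1 hi with hi | hi
      · exact (ih.1 h1) i hi
      · rw [hi]; omega
    · intro h
      exact ⟨ih.2 fun i hi => h i (by omega), Or.inr (h n (by omega))⟩

lemma mod_pow_eq_of_digits_eq (hk : 2 ≤ k) {x y : ℕ} {n : ℕ}
    (h : ∀ i < n, digit k x i = digit k y i) : x % k ^ n = y % k ^ n := by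
  induction n with
  | zero => simp [Nat.mod_one]
  | succ n ih =>
    rw [mod_pow_succ, mod_pow_succ, ih (fun i hi => h i (by omega)), h n (by omega)]

lemma digit_pow (hk : 2 ≤ k) (j i : ℕ) :
    digit k (k ^ j) i = if i = j then 1 else 0 := by
  unfold digit
  rcases lt_trichotomy i j with h | h | h
  · rw [if_neg (by omega)]
    have h1 : k ^ j / k ^ i = k ^ (j - i) := Nat.pow_div (by omega) (by omega)
    rw [h1]
    exact Nat.dvd_iff_mod_eq_zero.1 (dvd_pow_self k (by omega))
  · subst h
    rw [if_pos rfl, Nat.div_self (Nat.pow_pos (by omega)), Nat.mod_eq_of_lt (by omega)]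
  · rw [if_neg (by omega), Nat.div_eq_of_lt (Nat.pow_lt_pow_right (by omega) h), Nat.zero_mod]

end Helpers

section Helpers2
variable {k : ℕ}
variable {k : ℕ}

lemma sum_pow_lt (hk : 2 ≤ k) (f : ℕ → ℕ) (hf : ∀ j, f j < k) (m : ℕ) :
    ∑ j ∈ Finset.range m, f j * k ^ j < k ^ m := by
  induction m with
  | zero => simp
  | succ m ih =>
    rw [Finset.sum_range_succ, pow_succ, mul_comm (k ^ m) k]
    have h1 : (f m + 1) * k ^ m ≤ k * k ^ m := Nat.mul_le_mul_right _ (hf m)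
    rw [add_mul, one_mul] at h1
    linarith

lemma digit_sum (hk : 2 ≤ k) (f : ℕ → ℕ) (hf : ∀ j, f j < k) {m i : ℕ} (him : i < m) :
    digit k (∑ j ∈ Finset.range m, f j * k ^ j) i = f i := by
  have hsplit : Finset.range m = Finset.range (i + 1) ∪ Finset.Ico (i + 1) m := by
    rw [Finset.range_eq_Ico, Finset.range_eq_Ico]
    exact (Finset.Ico_union_Ico_eq_Ico (by omega) (by omega)).symm
  have hdisj : Disjoint (Finset.range (i + 1)) (Finset.Ico (i + 1) m) := by
    simp [Finset.disjoint_left]; omega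
  rw [hsplit, Finset.sum_union hdisj, Finset.sum_range_succ]
  have hB : k ^ (i + 1) ∣ ∑ j ∈ Finset.Ico (i + 1) m, f j * k ^ j := by
    apply Finset.dvd_sum
    intro j hj
    exact Dvd.dvd.mul_left (pow_dvd_pow k (Finset.mem_Ico.1 hj).1) _
  obtain ⟨t, ht⟩ := hB
  have hA : ∑ j ∈ Finset.range i, f j * k ^ j < k ^ i := sum_pow_lt hk f hf i
  rw [ht]
  unfold digit
  have hkipos : 0 < k ^ i := Nat.pow_pos (by omega)
  have : ∑ j ∈ Finset.range i, f j * k ^ j + f i * k ^ i + k ^ (i + 1) * t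
      = ∑ j ∈ Finset.range i, f j * k ^ j + k ^ i * (f i + k * t) := by ring
  rw [this, Nat.add_mul_div_left _ _ hkipos, Nat.div_eq_of_lt hA, Nat.zero_add,
    Nat.add_mul_mod_self_left, Nat.mod_eq_of_lt (hf i)]

end Helpers2

def step (q : Fin 3) (a b : ℕ) : Fin 3 :=
  if q = 0 then (if a = 0 ∧ b = 0 then 0 else if 1 ≤ a ∧ b = 1 then 1 else 2)
  else if q = 1 then (if b = 0 then 1 else 2)
  else 2

def trace (k x y : ℕ) : ℕ → Fin 3
  | 0 => 0
  | i + 1 => step (trace k x y i) (digit k x i) (digit k y i)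

lemma mem_delta {k : ℕ} {q q' : Fin 3} {a : Fin 2 → Fin k}
    (h : (q, a, q') ∈ (AV k).δ) : q' = step q (a 0 : ℕ) (a 1 : ℕ) := by
  change _ ∨ _ at h; dsimp only at h
  unfold step
  rcases h with ⟨h1, h2, h3⟩ | ⟨h1, h2, h3⟩ | ⟨h1, h2, h3⟩ | ⟨h1, h2, h3, h4⟩ |
    ⟨h1, h2, h3⟩ | ⟨h1, h2⟩
  · subst h1 h3; rw [if_pos rfl, if_pos h2]
  · subst h1 h3; rw [if_pos rfl, if_neg (by rintro ⟨u, v⟩; omega), if_pos h2]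
  · subst h1 h3; rw [if_neg (by decide), if_pos rfl, if_pos h2]
  · subst h1 h4; rw [if_pos rfl, if_neg h2, if_neg h3]
  · subst h1 h3; rw [if_neg (by decide), if_pos rfl, if_neg h2]
  · subst h1 h2; rw [if_neg (by decide), if_neg (by decide)]

lemma step_mem {k : ℕ} (q : Fin 3) (a : Fin 2 → Fin k) :
    (q, a, step q (a 0 : ℕ) (a 1 : ℕ)) ∈ (AV k).δ := by
  show _ ∨ _; dsimp only
  unfold step
  fin_cases q <;> simp <;> by_cases h1 : (a 0 : ℕ) = 0 ∧ (a 1 : ℕ) = 0 <;>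
    by_cases h2 : 1 ≤ (a 0 : ℕ) ∧ (a 1 : ℕ) = 1 <;>
    by_cases h3 : (a 1 : ℕ) = 0 <;> simp_all <;> omega

lemma W_iff_trace {k : ℕ} (hk : 2 ≤ k) (x y n : ℕ) (q1 : Fin 3) :
    (AV k).W q1 ![x, y] n ↔ trace k x y n = q1 := by
  constructor
  · rintro ⟨w, hlt, huniq, h0, hn, htrans⟩
    have key : ∀ i ≤ n, digit k (w (trace k x y i)) i = 1 := by
      intro i
      induction i with
      | zero => intro _; exact h0
      | succ i ih =>
        intro hin
        have hi : digit k (w (trace k x y i)) i = 1 := ih (by omega)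
        obtain ⟨a, q', hmem, hq', ha⟩ := htrans i (by omega) _ hi
        have hstep : q' = step (trace k x y i) (a 0 : ℕ) (a 1 : ℕ) := mem_delta hmem
        have ha0 : (a 0 : ℕ) = digit k x i := (ha 0).symm
        have ha1 : (a 1 : ℕ) = digit k y i := (ha 1).symm
        have : trace k x y (i + 1) = q' := by
          rw [hstep, ha0, ha1]; rfl
        rw [this]; exact hq'
    obtain ⟨q, hq, hq'⟩ := huniq n le_rfl
    have e1 : trace k x y n = q := by
      by_contra hne
      have := hq' _ hne
      rw [key n le_rfl] at this; omega
    have e2 : q1 = q := by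
      by_contra hne
      have := hq' _ hne
      rw [hn] at this; omega
    rw [e1, e2]
  · intro htr
    refine ⟨fun (q : Fin 3) => ∑ j ∈ Finset.range (n + 1),
      (if trace k x y j = q then 1 else 0) * k ^ j, ?_, ?_, ?_, ?_, ?_⟩
    · intro q
      exact sum_pow_lt hk _ (fun j => by split <;> omega) _
    · intro i hi
      refine ⟨trace k x y i, ?_, ?_⟩
      · rw [digit_sum hk _ (fun j => by split <;> omega) (by omega), if_pos rfl]
      · intro q' hq'
        rw [digit_sum hk _ (fun j => by split <;> omega) (by omega),
          if_neg (fun h => hq' h.symm)]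
    · have : (AV k).q0 = trace k x y 0 := rfl
      rw [this, digit_sum hk _ (fun j => by split <;> omega) (by omega), if_pos rfl]
    · rw [digit_sum hk _ (fun j => by split <;> omega) (by omega), if_pos htr]
    · intro i hi q hq
      rw [digit_sum hk _ (fun j => by split <;> omega) (by omega)] at hq
      have hqi : trace k x y i = q := by by_contra h; rw [if_neg h] at hq; omega
      refine ⟨![⟨digit k x i, digit_lt hk x i⟩, ⟨digit k y i, digit_lt hk y i⟩],
        trace k x y (i + 1), ?_, ?_, ?_⟩
      · have : trace k x y (i + 1) = step q (digit k x i) (digit k y i) := by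
          rw [← hqi]; rfl
        rw [this]
        exact step_mem q _
      · rw [digit_sum hk _ (fun j => by split <;> omega) (by omega), if_pos rfl]
      · intro j
        fin_cases j <;> rfl

lemma step_eq_zero_iff (q : Fin 3) (a b : ℕ) :
    step q a b = 0 ↔ q = 0 ∧ a = 0 ∧ b = 0 := by
  unfold step
  fin_cases q <;> split_ifs <;> simp_all <;> omega

lemma step_eq_one_iff (q : Fin 3) (a b : ℕ) :
    step q a b = 1 ↔ (q = 0 ∧ 1 ≤ a ∧ b = 1) ∨ (q = 1 ∧ b = 0) := by
  unfold step
  fin_cases q <;> split_ifs <;> simp_all <;> omega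

lemma trace_eq_zero_iff (k x y : ℕ) (n : ℕ) :
    trace k x y n = 0 ↔ ∀ i < n, digit k x i = 0 ∧ digit k y i = 0 := by
  induction n with
  | zero => simp [trace]
  | succ n ih =>
    show step _ _ _ = 0 ↔ _
    rw [step_eq_zero_iff, ih]
    constructor
    · rintro ⟨h1, h2, h3⟩ i hi
      rcases Nat.lt_succ_iff_lt_or_eq.1 hi with hi | hi
      · exact h1 i hi
      · subst hi; exact ⟨h2, h3⟩
    · intro h
      exact ⟨fun i hi => h i (by omega), (h n (by omega)).1, (h n (by omega)).2⟩

lemma trace_eq_one_iff (k x y : ℕ) (n : ℕ) :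
    trace k x y n = 1 ↔ ∃ j < n, (∀ i < j, digit k x i = 0 ∧ digit k y i = 0) ∧
      1 ≤ digit k x j ∧ digit k y j = 1 ∧ ∀ i, j < i → i < n → digit k y i = 0 := by
  induction n with
  | zero => simp [trace]
  | succ n ih =>
    show step _ _ _ = 1 ↔ _
    rw [step_eq_one_iff, trace_eq_zero_iff, ih]
    constructor
    · rintro (⟨h1, h2, h3⟩ | ⟨⟨j, hj, h1, h2, h3, h4⟩, h5⟩)
      · exact ⟨n, by omega, h1, h2, h3, fun i hi hi' => by omega⟩
      · refine ⟨j, by omega, h1, h2, h3, fun i hi hi' => ?_⟩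
        rcases Nat.lt_succ_iff_lt_or_eq.1 hi' with hi' | hi'
        · exact h4 i hi hi'
        · subst hi'; exact h5
    · rintro ⟨j, hj, h1, h2, h3, h4⟩
      rcases Nat.lt_succ_iff_lt_or_eq.1 hj with hj | hj
      · exact Or.inr ⟨⟨j, hj, h1, h2, h3, fun i hi hi' => h4 i hi (by omega)⟩,
          h4 n (by omega) (by omega)⟩
      · subst hj; exact Or.inl ⟨h1, h2, h3⟩


lemma Vk_eq {k : ℕ} (hk : 2 ≤ k) {x' j : ℕ} (hx : x' ≠ 0)
    (h1 : k ^ j ∣ x') (h2 : ¬ k ^ (j + 1) ∣ x') : Vk k x' = k ^ j := by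
  rw [Vk, if_neg hx]
  congr 1
  rw [Nat.findGreatest_eq_iff]
  have hxpos : 0 < x' := Nat.pos_of_ne_zero hx
  refine ⟨?_, fun _ => h1, fun m hm hm' hdvd => ?_⟩
  · exact le_of_lt (lt_of_lt_of_le (Nat.lt_pow_self (n := j) (by omega)) (Nat.le_of_dvd hxpos h1))
  · exact h2 (dvd_trans (pow_dvd_pow k (by omega)) hdvd)

/-- `A_V` computes `V_k` on residues modulo `k^n`: state `q₀` is reached iff
`x ≡ 0` and `y ≡ 0`, and `V_k(x mod k^n) = y mod k^n` iff state `q₀` or `q₁`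
is reached. -/
theorem stmt18 (k : ℕ) (hk : 2 ≤ k) :
    ∀ x y n : ℕ,
      ((x % k ^ n = 0 ∧ y % k ^ n = 0) ↔ (AV k).W (0 : Fin 3) ![x, y] n) ∧
      (Vk k (x % k ^ n) = y % k ^ n ↔
        ((AV k).W (0 : Fin 3) ![x, y] n ∨ (AV k).W (1 : Fin 3) ![x, y] n)) := by
  intro x y n
  have hW0 : (AV k).W (0 : Fin 3) ![x, y] n ↔
      (∀ i < n, digit k x i = 0 ∧ digit k y i = 0) := by
    rw [W_iff_trace hk, trace_eq_zero_iff]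
  have hW1 : (AV k).W (1 : Fin 3) ![x, y] n ↔
      (∃ j < n, (∀ i < j, digit k x i = 0 ∧ digit k y i = 0) ∧
        1 ≤ digit k x j ∧ digit k y j = 1 ∧ ∀ i, j < i → i < n → digit k y i = 0) := by
    rw [W_iff_trace hk, trace_eq_one_iff]
  have part1 : (x % k ^ n = 0 ∧ y % k ^ n = 0) ↔ (AV k).W (0 : Fin 3) ![x, y] n := by
    rw [hW0, mod_pow_eq_zero_iff hk, mod_pow_eq_zero_iff hk]
    constructor
    · rintro ⟨hx, hy⟩ i hi; exact ⟨hx i hi, hy i hi⟩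
    · intro h; exact ⟨fun i hi => (h i hi).1, fun i hi => (h i hi).2⟩
  refine ⟨part1, ?_⟩
  rw [hW0, hW1]
  by_cases hx0 : x % k ^ n = 0
  · have hdx : ∀ i < n, digit k x i = 0 := (mod_pow_eq_zero_iff hk x n).1 hx0
    rw [hx0]
    have hv0 : Vk k 0 = 0 := by rw [Vk, if_pos rfl]
    rw [hv0]
    constructor
    · intro h
      left
      intro i hi
      exact ⟨hdx i hi, (mod_pow_eq_zero_iff hk y n).1 h.symm i hi⟩
    · rintro (h | ⟨j, hj, h1, h2, h3, h4⟩)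
      · exact ((mod_pow_eq_zero_iff hk y n).2 fun i hi => (h i hi).2).symm
      · exact absurd (hdx j hj) (by omega)
  · have hex : ∃ i, i < n ∧ digit k x i ≠ 0 := by
      by_contra hc
      push_neg at hc
      exact hx0 ((mod_pow_eq_zero_iff hk x n).2 fun i hi => hc i hi)
    set j := Nat.find hex with hjdef
    obtain ⟨hjn, hdxj⟩ : j < n ∧ digit k x j ≠ 0 := Nat.find_spec hex
    have hmin : ∀ i < j, digit k x i = 0 := by
      intro i hi
      have := Nat.find_min hex hi
      push_neg at this
      exact this (by omega)
    have hV : Vk k (x % k ^ n) = k ^ j := by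
      apply Vk_eq hk hx0
      · rw [Nat.dvd_iff_mod_eq_zero, mod_pow_eq_zero_iff hk]
        intro i hi
        rw [digit_mod_pow (by omega)]
        exact hmin i hi
      · intro hdvd
        rw [Nat.dvd_iff_mod_eq_zero, mod_pow_eq_zero_iff hk] at hdvd
        have := hdvd j (by omega)
        rw [digit_mod_pow (by omega)] at this
        exact hdxj this
    rw [hV]
    have hkj : k ^ j < k ^ n := Nat.pow_lt_pow_right (by omega) hjn
    constructor
    · intro h
      have hdy : ∀ i < n, digit k y i = if i = j then 1 else 0 := by
        intro i hi
        rw [← digit_mod_pow hi, ← h, digit_pow hk]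
      right
      refine ⟨j, hjn, fun i hi => ⟨hmin i hi, ?_⟩, by omega, ?_, fun i hij hin => ?_⟩
      · rw [hdy i (by omega), if_neg (by omega)]
      · rw [hdy j hjn, if_pos rfl]
      · rw [hdy i hin, if_neg (by omega)]
    · rintro (h | ⟨j', hj', h1, h2, h3, h4⟩)
      · exact absurd (h j hjn).1 hdxj
      · have hjj' : j ≤ j' := Nat.find_min' hex ⟨hj', by omega⟩
        have hj'j : ¬ j < j' := fun hc => absurd (h1 j hc).1 hdxj
        have hjeq : j' = j := by omega
        rw [hjeq] at h1 h2 h3 h4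
        have := mod_pow_eq_of_digits_eq hk (x := y) (y := k ^ j) (n := n) ?_
        · rw [this, Nat.mod_eq_of_lt hkj]
        · intro i hi
          rw [digit_pow hk]
          rcases lt_trichotomy i j with hij | hij | hij
          · rw [if_neg (by omega)]; exact (h1 i hij).2
          · subst hij; rw [if_pos rfl]; exact h3
          · rw [if_neg (by omega)]; exact h4 i hij hi
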